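/- Let O be a complete discrete valuation ring with maximal ideal m generated by π, residue characteristic p odd, and let a, b ∈ O be units with a² − 4b a unit. Then F(x) = x⁴ + aπx² + bπ² is irreducible over O. -/

import Mathlib

open Polynomial

private lemma monic_deg2 {O : Type*} [CommRing O] (p : O[X]) (hm : p.Monic)
    (h : p.natDegree = 2) : p = X^2 + C (p.coeff 1) * X + C (p.coeff 0) := by
  have h3 := p.as_sum_range' 3 (by omega)
  have h2 : p.coeff 2 = 1 := by
    have := hm.coeff_natDegree; rwa [h] at this
  rw [h3]
  simp [Finset.sum_range_succ, monomial_zero_left, ← C_mul_X_pow_eq_monomial, h2]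
  ring


/-- Over a complete DVR `O` with uniformizer `π` and odd residue characteristic, if
`a, b, a² - 4b` are units and the residual polynomial `y² + ā y + b̄` is irreducible over
the residue field, then `F(x) = x⁴ + aπ x² + bπ²` is irreducible over `O`. -/
theorem stmt7 {O : Type*} [CommRing O] [IsDomain O] [IsDiscreteValuationRing O]
    [IsAdicComplete (IsLocalRing.maximalIdeal O) O]
    (π a b : O) (hπ : IsLocalRing.maximalIdeal O = Ideal.span {π})
    (hres2 : (2 : IsLocalRing.ResidueField O) ≠ 0)
    (ha : IsUnit a) (hb : IsUnit b) (hd : IsUnit (a ^ 2 - 4 * b))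
    (hresid : Irreducible
      (X ^ 2 + C (IsLocalRing.residue O a) * X + C (IsLocalRing.residue O b) :
        Polynomial (IsLocalRing.ResidueField O))) :
    Irreducible (X ^ 4 + C (a * π) * X ^ 2 + C (b * π ^ 2) : Polynomial O) := by
  set R := IsLocalRing.residue O with hR
  set F : O[X] := X ^ 4 + C (a * π) * X ^ 2 + C (b * π ^ 2) with hF
  have hπirr : Irreducible π := (IsDiscreteValuationRing.irreducible_iff_uniformizer π).mpr hπ
  have hπp : Prime π := hπirr.prime
  have hπ0 : π ≠ 0 := hπp.ne_zero
  have hunit_dvd : ∀ x : O, IsUnit x → ¬ π ∣ x := by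
    intro x hx hdx
    exact hπirr.not_isUnit (isUnit_of_dvd_unit hdx hx)
  have hdvd_of_not_unit : ∀ x : O, ¬ IsUnit x → π ∣ x := by
    intro x hx
    rw [← Ideal.mem_span_singleton, ← hπ]
    exact hx
  -- F has no root in O
  have hroot : ∀ r : O, r ^ 4 + a * π * r ^ 2 + b * π ^ 2 ≠ 0 := by
    intro r h0
    have hr : π ∣ r := by
      rcases em (IsUnit r) with hu | hu
      · exfalso
        have h4 : π ∣ r ^ 4 := ⟨-(a * r ^ 2 + b * π), by linear_combination h0⟩
        exact hunit_dvd r hu (hπp.dvd_of_dvd_pow h4)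
      · exact hdvd_of_not_unit r hu
    obtain ⟨s, rfl⟩ := hr
    have h0' : π ^ 2 * s ^ 4 + a * π * s ^ 2 + b = 0 := by
      have : π ^ 2 * (π ^ 2 * s ^ 4 + a * π * s ^ 2 + b) = 0 := by linear_combination h0
      exact (mul_eq_zero.mp this).resolve_left (pow_ne_zero 2 hπ0)
    exact hunit_dvd b hb ⟨-(π * s ^ 4 + a * s ^ 2), by linear_combination h0'⟩
  -- residual polynomial has no root
  have hresroot : ∀ x : IsLocalRing.ResidueField O,
      x ^ 2 + R a * x + R b ≠ 0 := by
    intro x hx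
    set p : Polynomial (IsLocalRing.ResidueField O) := X ^ 2 + C (R a) * X + C (R b) with hp
    have hxroot : p.IsRoot x := by simp [hp, IsRoot, hx]
    obtain ⟨q, hq⟩ := dvd_iff_isRoot.mpr hxroot
    have hdeg : p.natDegree = 2 := by
      rw [hp]; compute_degree!
    rcases hresid.isUnit_or_isUnit hq with h1 | h1
    · exact (Polynomial.not_isUnit_X_sub_C x) h1
    · obtain ⟨w, hw, hwq⟩ := Polynomial.isUnit_iff.mp h1
      rw [hq, ← hwq, natDegree_mul (X_sub_C_ne_zero x) (C_ne_zero.mpr hw.ne_zero),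
        natDegree_X_sub_C, natDegree_C] at hdeg
      omega
  -- the key: sum/product equations force a residual root
  have hkey : ∀ d f : O, d + f = a * π → d * f = b * π ^ 2 → π ∣ d → False := by
    intro d f hsum hprod hdd
    obtain ⟨d', rfl⟩ := hdd
    have hf : f = π * (a - d') := by linear_combination hsum
    have hdf : d' * (a - d') = b := by
      have h2 : π ^ 2 * (d' * (a - d') - b) = 0 := by
        rw [hf] at hprod; linear_combination hprod
      exact sub_eq_zero.mp ((mul_eq_zero.mp h2).resolve_left (pow_ne_zero 2 hπ0))
    apply hresroot (R (-d'))
    have hz : (-d') ^ 2 + a * (-d') + b = 0 := by linear_combination -hdf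
    calc R (-d') ^ 2 + R a * R (-d') + R b = R ((-d') ^ 2 + a * (-d') + b) := by
          simp [map_add, map_mul, map_pow]
      _ = 0 := by rw [hz, map_zero]
  -- no quadratic factorization
  have hquad : ∀ c d e f : O,
      c + e = 0 → d + f + c * e = a * π → c * f + d * e = 0 → d * f = b * π ^ 2 → False := by
    intro c d e f e1 e2 e3 e4
    have he : e = -c := by linear_combination e1
    subst he
    have e3' : c * (f - d) = 0 := by linear_combination e3
    rcases mul_eq_zero.mp e3' with hc | hfd
    · subst hc
      have hsum : d + f = a * π := by linear_combination e2
      have hdvddf : π ∣ d * f := ⟨b * π, by linear_combination e4⟩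
      rcases (Prime.dvd_mul hπp).mp hdvddf with hdd | hff
      · exact hkey d f hsum e4 hdd
      · exact hkey f d (by linear_combination hsum) (by linear_combination e4) hff
    · have hfd' : f = d := sub_eq_zero.mp hfd
      subst hfd'
      -- now e4 : f * f = b * π ^ 2, e2 : f + f + c * -c = a * π
      have hd2 : π ∣ f := by
        rcases (Prime.dvd_mul hπp).mp (⟨b * π, by linear_combination e4⟩ : π ∣ f * f) with h | h
          <;> exact h
      obtain ⟨d₀, rfl⟩ := hd2
      have hd₀ : d₀ ^ 2 = b := by
        have h2 : π ^ 2 * (d₀ ^ 2 - b) = 0 := by linear_combination e4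
        exact sub_eq_zero.mp ((mul_eq_zero.mp h2).resolve_left (pow_ne_zero 2 hπ0))
      have hc2 : π ∣ c := by
        apply hπp.dvd_of_dvd_pow (n := 2)
        exact ⟨2 * d₀ - a, by linear_combination -e2⟩
      obtain ⟨c₀, rfl⟩ := hc2
      have hae : a = 2 * d₀ - π * c₀ ^ 2 := by
        have h2 : π * (a - 2 * d₀ + π * c₀ ^ 2) = 0 := by linear_combination -e2
        have h3 := (mul_eq_zero.mp h2).resolve_left hπ0
        linear_combination h3
      exact hunit_dvd _ hd ⟨π * c₀ ^ 4 - 4 * d₀ * c₀ ^ 2, by rw [hae, ← hd₀]; ring⟩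
  -- main argument
  have hFm : F.Monic := by
    rw [hF]; monicity!
  have hFdeg : F.natDegree = 4 := by rw [hF]; compute_degree!
  constructor
  · intro hu
    have := natDegree_eq_zero_of_isUnit hu
    omega
  · intro G H hGH
    by_contra hcon
    push_neg at hcon
    obtain ⟨hGu, hHu⟩ := hcon
    have hG0 : G ≠ 0 := by rintro rfl; rw [zero_mul] at hGH; exact hFm.ne_zero hGH
    have hH0 : H ≠ 0 := by rintro rfl; rw [mul_zero] at hGH; exact hFm.ne_zero hGH
    have hlead : G.leadingCoeff * H.leadingCoeff = 1 := by
      have := congrArg leadingCoeff hGH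
      rw [hFm.leadingCoeff, leadingCoeff_mul] at this
      exact this.symm
    set u := G.leadingCoeff with hu
    set v := H.leadingCoeff with hv
    set G₁ := C v * G with hG₁
    set H₁ := C u * H with hH₁
    have hvu : v * u = 1 := by rw [mul_comm]; exact hlead
    have hv0 : v ≠ 0 := by intro h; rw [h, zero_mul] at hvu; exact one_ne_zero hvu.symm
    have hu0 : u ≠ 0 := by intro h; rw [h, mul_zero] at hvu; exact one_ne_zero hvu.symm
    have hGH₁ : F = G₁ * H₁ := by
      have h' : G₁ * H₁ = C (v * u) * (G * H) := by rw [hG₁, hH₁, C_mul]; ring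
      rw [h', hvu, C_1, one_mul, hGH]
    have hG₁m : G₁.Monic := by
      unfold Polynomial.Monic
      rw [hG₁, leadingCoeff_mul, leadingCoeff_C, ← hu, hvu]
    have hH₁m : H₁.Monic := by
      unfold Polynomial.Monic
      rw [hH₁, leadingCoeff_mul, leadingCoeff_C, ← hv, mul_comm, hvu]
    have hsum : G₁.natDegree + H₁.natDegree = 4 := by
      rw [← natDegree_mul hG₁m.ne_zero hH₁m.ne_zero, ← hGH₁, hFdeg]
    have hG₁ne : G₁.natDegree ≠ 0 := by
      intro h
      have h1 : G₁ = 1 := hG₁m.natDegree_eq_zero.mp h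
      exact hGu (IsUnit.of_mul_eq_one (a := G) (C v) (by rw [mul_comm, ← hG₁, h1]))
    have hH₁ne : H₁.natDegree ≠ 0 := by
      intro h
      have h1 : H₁ = 1 := hH₁m.natDegree_eq_zero.mp h
      exact hHu (IsUnit.of_mul_eq_one (a := H) (C u) (by rw [mul_comm, ← hH₁, h1]))
    -- helper: a monic degree-1 factor gives a root
    have hlin : ∀ P Q : O[X], P.Monic → P.natDegree = 1 → F = P * Q → False := by
      intro P Q hPm hP1 hPQ
      have hPeq : P = X + C (P.coeff 0) := hPm.eq_X_add_C hP1
      apply hroot (-(P.coeff 0))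
      rw [hPeq] at hPQ
      have hev := congrArg (fun p => p.eval (-(P.coeff 0))) hPQ
      simp only [hF, eval_add, eval_mul, eval_pow, eval_X, eval_C, eval_neg] at hev
      linear_combination hev
    have hb1 : 1 ≤ G₁.natDegree := Nat.one_le_iff_ne_zero.mpr hG₁ne
    have hb3 : G₁.natDegree ≤ 3 := by omega
    interval_cases hG₁d : G₁.natDegree
    · exact hlin G₁ H₁ hG₁m hG₁d hGH₁
    · -- 2-2 case
      have hH₁d : H₁.natDegree = 2 := by omega
      have hGeq := monic_deg2 G₁ hG₁m hG₁d
      have hHeq := monic_deg2 H₁ hH₁m hH₁d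
      set c := G₁.coeff 1
      set d := G₁.coeff 0
      set e := H₁.coeff 1
      set f := H₁.coeff 0
      have hexp : F = X^4 + C (c + e) * X^3 + C (d + f + c*e) * X^2 + C (c*f + d*e) * X + C (d*f) := by
        rw [hGH₁, hGeq, hHeq]
        simp only [C_add, C_mul]
        ring
      rw [hF] at hexp
      have h3 := congrArg (fun p => p.coeff 3) hexp
      have h2 := congrArg (fun p => p.coeff 2) hexp
      have h1 := congrArg (fun p => p.coeff 1) hexp
      have h0 := congrArg (fun p => p.coeff 0) hexp
      simp only [coeff_add, coeff_C_mul, coeff_X_pow, coeff_X, coeff_C] at h3 h2 h1 h0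
      norm_num at h3 h2 h1 h0
      exact hquad c d e f (by linear_combination -h3) (by linear_combination -h2)
        (by linear_combination -h1) (by linear_combination -h0)
    · have hH₁d : H₁.natDegree = 1 := by omega
      exact hlin H₁ G₁ hH₁m hH₁d (by rw [hGH₁, mul_comm])
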